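/- Let d ≥ 1 and let (θ_i; θ*_i; φ_i; ϕ_i) be a parameter array. Define a_0, a_d, a*_0, a*_d by a_0 = θ_0 + φ_1/(θ*_0 − θ*_1), a_d = θ_d + φ_d/(θ*_d − θ*_{d−1}), a*_0 = θ*_0 + φ_1/(θ_0 − θ_1), a*_d = θ*_d + φ_d/(θ_d − θ_{d−1}). Then (a_0 − a_d)(θ*_0 − θ*_1)(θ*_{d−1} − θ*_d)/(θ*_0 − θ*_d) = (a*_0 − a*_d)(θ_0 − θ_1)(θ_{d−1} − θ_d)/(θ_0 − θ_d). -/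

import Mathlib

open Finset

private def bb {K : Type*} [Field K] (x : K) : ℕ → K
  | 0 => 0
  | 1 => 1
  | n + 2 => x * bb x (n + 1) - bb x n

private lemma bb_zero {K : Type*} [Field K] (x : K) : bb x 0 = 0 := rfl
private lemma bb_one {K : Type*} [Field K] (x : K) : bb x 1 = 1 := rfl
private lemma bb_two {K : Type*} [Field K] (x : K) (n : ℕ) :
    bb x (n + 2) = x * bb x (n + 1) - bb x n := rfl

private lemma S_lem {K : Type*} [Field K] (x : K) (n : ℕ) :
    (x - 2) * ∑ j ∈ range (n + 1), bb x j = bb x (n + 1) - bb x n - 1 := by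
  induction n with
  | zero => simp [bb]
  | succ n ih =>
      rw [Finset.sum_range_succ, bb_two]
      linear_combination ih

private lemma G_lem {K : Type*} [Field K] (x : K) (n : ℕ) :
    (∑ j ∈ range (n + 1), bb x j) * (1 + bb x (n + 1) - bb x n) = bb x n * bb x (n + 1) := by
  induction n with
  | zero => simp [bb]
  | succ n ih =>
      rw [Finset.sum_range_succ, bb_two]
      linear_combination ih + bb x (n + 1) * S_lem x n

private def aa {K : Type*} [Field K] (x : K) (n : ℕ) : K := bb x (n + 1) - x * bb x n

private lemma Zero_lem {K : Type*} [Field K] (x : K) (n : ℕ) :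
    (1 + aa x n) * (∑ j ∈ range (n + 1), bb x j)
      = bb x n * (∑ j ∈ range (n + 1), aa x j) := by
  have h2 : ∑ j ∈ range (n + 1), bb x (j + 1)
      = (∑ j ∈ range (n + 1), bb x j) + bb x (n + 1) := by
    have ha := Finset.sum_range_succ' (bb x) (n + 1)
    have hb := Finset.sum_range_succ (bb x) (n + 1)
    rw [hb] at ha
    simp only [bb_zero, add_zero] at ha
    linear_combination -ha
  have h1 : ∑ j ∈ range (n + 1), aa x j
      = (∑ j ∈ range (n + 1), bb x j) + bb x (n + 1) - x * ∑ j ∈ range (n + 1), bb x j := by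
    simp only [aa, Finset.sum_sub_distrib, ← Finset.mul_sum, h2]
  rw [h1]
  simp only [aa]
  linear_combination G_lem x n

private lemma diff_repr {K : Type*} [Field K] (x : K) (n : ℕ) (D : ℕ → K)
    (hrec : ∀ j, j + 2 ≤ n → D (j + 2) = x * D (j + 1) - D j) :
    ∀ j, j ≤ n → D j = aa x j * D 0 + bb x j * D 1 := by
  intro j
  induction j using Nat.strong_induction_on with
  | _ j ih =>
    match j with
    | 0 => intro _; simp [aa, bb]
    | 1 => intro _; simp [aa, bb]
    | j + 2 =>
      intro hj
      rw [hrec j hj, ih (j + 1) (by omega) (by omega), ih j (by omega) (by omega)]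
      have e1 : aa x (j + 2) = x * aa x (j + 1) - aa x j := by
        simp only [aa, show j + 2 + 1 = (j + 1) + 2 from rfl, bb_two]; ring
      rw [e1, bb_two]
      ring

private lemma key_lem {K : Type*} [Field K] (x : K) (n : ℕ) (D E : ℕ → K)
    (hD : ∀ j, j + 2 ≤ n → D (j + 2) = x * D (j + 1) - D j)
    (hE : ∀ j, j + 2 ≤ n → E (j + 2) = x * E (j + 1) - E j) :
    (D 0 + D n) * (∑ j ∈ range (n + 1), E j)
      = (E 0 + E n) * (∑ j ∈ range (n + 1), D j) := by
  have hsD : ∑ j ∈ range (n + 1), D j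
      = (∑ j ∈ range (n + 1), aa x j) * D 0 + (∑ j ∈ range (n + 1), bb x j) * D 1 := by
    rw [Finset.sum_mul, Finset.sum_mul, ← Finset.sum_add_distrib]
    exact Finset.sum_congr rfl fun j hj =>
      diff_repr x n D hD j (by simpa using Nat.lt_succ_iff.mp (mem_range.mp hj))
  have hsE : ∑ j ∈ range (n + 1), E j
      = (∑ j ∈ range (n + 1), aa x j) * E 0 + (∑ j ∈ range (n + 1), bb x j) * E 1 := by
    rw [Finset.sum_mul, Finset.sum_mul, ← Finset.sum_add_distrib]
    exact Finset.sum_congr rfl fun j hj =>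
      diff_repr x n E hE j (by simpa using Nat.lt_succ_iff.mp (mem_range.mp hj))
  rw [hsD, hsE, diff_repr x n D hD n le_rfl, diff_repr x n E hE n le_rfl]
  linear_combination (D 0 * E 1 - E 0 * D 1) * Zero_lem x n

private lemma final_alg {K : Type*} [Field K] (t0 t1 tc td s0 s1 sc sd p1 f1 fd : K)
    (hs01 : s0 - s1 ≠ 0) (hscd : sc - sd ≠ 0) (hs0d : s0 - sd ≠ 0)
    (ht01 : t0 - t1 ≠ 0) (htcd : tc - td ≠ 0) (ht0d : t0 - td ≠ 0)
    (hf1 : f1 = p1 + (s1 - s0) * (t0 - td))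
    (hfd : fd = p1 + (sd - s0) * (tc - td))
    (KR : (t0 - t1 + (tc - td)) * (s0 - sd) = (s0 - s1 + (sc - sd)) * (t0 - td)) :
    ((t0 + f1 / (s0 - s1)) - (td + fd / (sd - sc))) * (s0 - s1) * (sc - sd) / (s0 - sd)
      = ((s0 + f1 / (t0 - t1)) - (sd + fd / (td - tc))) * (t0 - t1) * (tc - td) / (t0 - td) := by
  subst hf1 hfd
  have hsdc : sd - sc ≠ 0 := fun h => hscd (by linear_combination -h)
  have htdc : td - tc ≠ 0 := fun h => htcd (by linear_combination -h)
  have hfr : (s0 - s1 + (sc - sd)) / (s0 - sd) = (t0 - t1 + (tc - td)) / (t0 - td) := by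
    rw [div_eq_div_iff hs0d ht0d]
    linear_combination -KR
  have hL : ((t0 + (p1 + (s1 - s0) * (t0 - td)) / (s0 - s1))
        - (td + (p1 + (sd - s0) * (tc - td)) / (sd - sc))) * (s0 - s1) * (sc - sd) / (s0 - sd)
      = p1 * ((s0 - s1 + (sc - sd)) / (s0 - sd)) + (s1 - s0) * (tc - td) := by
    field_simp
    ring
  have hR : ((s0 + (p1 + (s1 - s0) * (t0 - td)) / (t0 - t1))
        - (sd + (p1 + (sd - s0) * (tc - td)) / (td - tc))) * (t0 - t1) * (tc - td) / (t0 - td)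
      = p1 * ((t0 - t1 + (tc - td)) / (t0 - td)) + (s1 - s0) * (tc - td) := by
    field_simp
    ring
  rw [hL, hR, hfr]

/-- A parameter array of diameter `d` (Terwilliger's classification conditions (i)-(v)). -/
structure ParameterArray (K : Type*) [Field K] (d : ℕ) where
  θ : ℕ → K
  θs : ℕ → K
  φ : ℕ → K
  ϕ : ℕ → K
  φ_ne : ∀ i, 1 ≤ i → i ≤ d → φ i ≠ 0
  ϕ_ne : ∀ i, 1 ≤ i → i ≤ d → ϕ i ≠ 0
  θ_inj : ∀ i j, i ≤ d → j ≤ d → i ≠ j → θ i ≠ θ j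
  θs_inj : ∀ i j, i ≤ d → j ≤ d → i ≠ j → θs i ≠ θs j
  eq_iii : ∀ i, 1 ≤ i → i ≤ d →
    φ i = ϕ 1 * (∑ h ∈ Finset.range i, (θ h - θ (d - h)) / (θ 0 - θ d))
      + (θs i - θs 0) * (θ (i - 1) - θ d)
  eq_iv : ∀ i, 1 ≤ i → i ≤ d →
    ϕ i = φ 1 * (∑ h ∈ Finset.range i, (θ h - θ (d - h)) / (θ 0 - θ d))
      + (θs i - θs 0) * (θ (d - i + 1) - θ 0)
  indep : ∃ β : K, ∀ i, 2 ≤ i → i ≤ d - 1 →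
    (θ (i - 2) - θ (i + 1)) / (θ (i - 1) - θ i) = β ∧
    (θs (i - 2) - θs (i + 1)) / (θs (i - 1) - θs i) = β

theorem stmt_3 {K : Type*} [Field K] {d : ℕ} (hd : 1 ≤ d) (P : ParameterArray K d) :
    ((P.θ 0 + P.φ 1 / (P.θs 0 - P.θs 1)) - (P.θ d + P.φ d / (P.θs d - P.θs (d - 1))))
        * (P.θs 0 - P.θs 1) * (P.θs (d - 1) - P.θs d) / (P.θs 0 - P.θs d)
      = ((P.θs 0 + P.φ 1 / (P.θ 0 - P.θ 1)) - (P.θs d + P.φ d / (P.θ d - P.θ (d - 1))))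
          * (P.θ 0 - P.θ 1) * (P.θ (d - 1) - P.θ d) / (P.θ 0 - P.θ d) := by
  have ht01 : P.θ 0 - P.θ 1 ≠ 0 := sub_ne_zero.mpr (P.θ_inj 0 1 (by omega) hd (by omega))
  have htcd : P.θ (d - 1) - P.θ d ≠ 0 :=
    sub_ne_zero.mpr (P.θ_inj (d - 1) d (by omega) le_rfl (by omega))
  have ht0d : P.θ 0 - P.θ d ≠ 0 := sub_ne_zero.mpr (P.θ_inj 0 d (by omega) le_rfl (by omega))
  have hs01 : P.θs 0 - P.θs 1 ≠ 0 := sub_ne_zero.mpr (P.θs_inj 0 1 (by omega) hd (by omega))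
  have hscd : P.θs (d - 1) - P.θs d ≠ 0 :=
    sub_ne_zero.mpr (P.θs_inj (d - 1) d (by omega) le_rfl (by omega))
  have hs0d : P.θs 0 - P.θs d ≠ 0 := sub_ne_zero.mpr (P.θs_inj 0 d (by omega) le_rfl (by omega))
  have hsum : ∑ h ∈ Finset.range d, (P.θ h - P.θ (d - h)) / (P.θ 0 - P.θ d) = 1 := by
    have hnum : ∑ h ∈ Finset.range d, (P.θ h - P.θ (d - h)) = P.θ 0 - P.θ d := by
      rw [Finset.sum_sub_distrib]
      have h2 : ∑ h ∈ Finset.range d, P.θ (d - h) = ∑ h ∈ Finset.range d, P.θ (h + 1) := by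
        rw [← Finset.sum_range_reflect (fun j => P.θ (j + 1)) d]
        refine Finset.sum_congr rfl fun h hh => ?_
        have := Finset.mem_range.mp hh
        congr 1
        omega
      rw [h2, ← Finset.sum_sub_distrib, Finset.sum_range_sub' P.θ d]
    rw [← Finset.sum_div, hnum, div_self ht0d]
  have hφ1 : P.φ 1 = P.ϕ 1 + (P.θs 1 - P.θs 0) * (P.θ 0 - P.θ d) := by
    have h := P.eq_iii 1 le_rfl hd
    rw [Finset.sum_range_one] at h
    simp only [Nat.sub_zero] at h
    rw [div_self ht0d, mul_one] at h
    exact h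
  have hφd : P.φ d = P.ϕ 1 + (P.θs d - P.θs 0) * (P.θ (d - 1) - P.θ d) := by
    have h := P.eq_iii d hd le_rfl
    rw [hsum, mul_one] at h
    exact h
  have KR : (P.θ 0 - P.θ 1 + (P.θ (d - 1) - P.θ d)) * (P.θs 0 - P.θs d)
      = (P.θs 0 - P.θs 1 + (P.θs (d - 1) - P.θs d)) * (P.θ 0 - P.θ d) := by
    rcases Nat.lt_or_ge d 2 with h2 | h2
    · have hd1 : d = 1 := by omega
      subst hd1
      norm_num
      ring
    · obtain ⟨β, hβ⟩ := P.indep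
      set n := d - 1 with hn
      have hdn : d = n + 1 := by omega
      have hD : ∀ j, j + 2 ≤ n →
          P.θ (j + 2) - P.θ (j + 2 + 1)
            = (β - 1) * (P.θ (j + 1) - P.θ (j + 1 + 1)) - (P.θ j - P.θ (j + 1)) := by
        intro j hj
        obtain ⟨h1, -⟩ := hβ (j + 2) (by omega) (by omega)
        rw [show j + 2 - 2 = j from by omega, show j + 2 - 1 = j + 1 from by omega] at h1
        have hne : P.θ (j + 1) - P.θ (j + 2) ≠ 0 :=
          sub_ne_zero.mpr (P.θ_inj (j + 1) (j + 2) (by omega) (by omega) (by omega))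
        rw [div_eq_iff hne] at h1
        linear_combination h1
      have hE : ∀ j, j + 2 ≤ n →
          P.θs (j + 2) - P.θs (j + 2 + 1)
            = (β - 1) * (P.θs (j + 1) - P.θs (j + 1 + 1)) - (P.θs j - P.θs (j + 1)) := by
        intro j hj
        obtain ⟨-, h1⟩ := hβ (j + 2) (by omega) (by omega)
        rw [show j + 2 - 2 = j from by omega, show j + 2 - 1 = j + 1 from by omega] at h1
        have hne : P.θs (j + 1) - P.θs (j + 2) ≠ 0 :=
          sub_ne_zero.mpr (P.θs_inj (j + 1) (j + 2) (by omega) (by omega) (by omega))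
        rw [div_eq_iff hne] at h1
        linear_combination h1
      have hk := key_lem (β - 1) n (fun j => P.θ j - P.θ (j + 1))
        (fun j => P.θs j - P.θs (j + 1)) hD hE
      rw [Finset.sum_range_sub' P.θ (n + 1), Finset.sum_range_sub' P.θs (n + 1), ← hdn] at hk
      norm_num at hk
      exact hk
  exact final_alg (P.θ 0) (P.θ 1) (P.θ (d - 1)) (P.θ d) (P.θs 0) (P.θs 1) (P.θs (d - 1))
    (P.θs d) (P.ϕ 1) (P.φ 1) (P.φ d) hs01 hscd hs0d ht01 htcd ht0d hφ1 hφd KR
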